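/- arXiv:1004.2996 — 5 statements merged into one kernel-verified Lean document; each statement's English description precedes it below -/
import Mathlib

section
/- If p is a prime with p ≡ 1 (mod 4), then the Pell-type equation x² − p·y² = −1 has a solution in integers x, y. -/
theorem pell_neg_one_of_prime_one_mod_four (p : ℕ) (hp : p.Prime) (hmod : p % 4 = 1) :
    ∃ x y : ℤ, x ^ 2 - (p : ℤ) * y ^ 2 = -1 := by
  have hp0 : 0 < p := hp.pos
  have hpz : (0 : ℤ) < (p : ℤ) := by exact_mod_cast hp0
  have hpsq : ¬ IsSquare ((p : ℤ)) := Prime.not_isSquare (Nat.prime_iff_prime_int.mp hp)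
  -- a natural-number solution to x² = 1 + p y² with x > 1, y > 0 exists
  have hex : ∃ n : ℕ, 1 < n ∧ ∃ m : ℕ, 0 < m ∧ n ^ 2 = 1 + p * m ^ 2 := by
    obtain ⟨a, hax, hay⟩ := Pell.Solution₁.exists_pos_of_not_isSquare hpz hpsq
    refine ⟨a.x.toNat, ?_, a.y.toNat, ?_, ?_⟩
    · omega
    · omega
    · have hprop := a.prop
      have hx : ((a.x.toNat : ℤ)) = a.x := Int.toNat_of_nonneg (by omega)
      have hy : ((a.y.toNat : ℤ)) = a.y := Int.toNat_of_nonneg (by omega)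
      have : ((a.x.toNat : ℤ)) ^ 2 = 1 + (p : ℤ) * (a.y.toNat : ℤ) ^ 2 := by
        rw [hx, hy]; linarith
      exact_mod_cast this
  classical
  have hPn := Nat.find_spec hex
  set n := Nat.find hex with hn
  have hmin : ∀ k < n, ¬ (1 < k ∧ ∃ m : ℕ, 0 < m ∧ k ^ 2 = 1 + p * m ^ 2) :=
    fun k hk => Nat.find_min hex hk
  clear_value n
  obtain ⟨hn1, m, hm0, heq⟩ := hPn
  -- the key fact mod 4
  have hp4 : ((p : ZMod 4)) = 1 := by
    have h : ((p : ZMod 4)) = ((p % 4 : ℕ) : ZMod 4) := (ZMod.natCast_mod p 4).symm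
    rw [h, hmod]; norm_num
  have heq4 : ((n : ZMod 4)) ^ 2 = 1 + ((m : ZMod 4)) ^ 2 := by
    have h : ((n ^ 2 : ℕ) : ZMod 4) = (((1 + p * m ^ 2 : ℕ)) : ZMod 4) := by rw [heq]
    push_cast at h
    rw [hp4] at h
    simpa using h
  -- n is odd
  have hnodd : n % 2 = 1 := by
    rcases Nat.even_or_odd n with he | ho
    · exfalso
      obtain ⟨t, ht⟩ := he
      have h4 : ((n : ZMod 4)) ^ 2 = 0 := by
        have h1 : (n : ZMod 4) = 2 * (t : ZMod 4) := by rw [ht]; push_cast; ring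
        rw [h1]
        have h2 : (2 * (t : ZMod 4)) ^ 2 = 4 * (t : ZMod 4) ^ 2 := by ring
        rw [h2]
        have h40 : (4 : ZMod 4) = 0 := by decide
        rw [h40, zero_mul]
      rw [h4] at heq4
      have h5 : ∀ y : ZMod 4, (0 : ZMod 4) ≠ 1 + y ^ 2 := by decide
      exact h5 _ heq4
    · exact Nat.odd_iff.mp ho
  -- m is even
  have hmeven : m % 2 = 0 := by
    rcases Nat.even_or_odd m with he | ho
    · exact Nat.even_iff.mp he
    · exfalso
      obtain ⟨s, hs⟩ := ho
      obtain ⟨t, ht⟩ : Odd n := Nat.odd_iff.mpr hnodd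
      have h1 : ((n : ZMod 4)) ^ 2 = 1 := by
        have h : (n : ZMod 4) = 2 * (t : ZMod 4) + 1 := by rw [ht]; push_cast; ring
        rw [h]
        have h' : (2 * (t : ZMod 4) + 1) ^ 2 = 4 * ((t : ZMod 4) ^ 2 + (t : ZMod 4)) + 1 := by ring
        rw [h']
        have h40 : (4 : ZMod 4) = 0 := by decide
        rw [h40, zero_mul, zero_add]
      have h2 : ((m : ZMod 4)) ^ 2 = 1 := by
        have h : (m : ZMod 4) = 2 * (s : ZMod 4) + 1 := by rw [hs]; push_cast; ring
        rw [h]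
        have h' : (2 * (s : ZMod 4) + 1) ^ 2 = 4 * ((s : ZMod 4) ^ 2 + (s : ZMod 4)) + 1 := by ring
        rw [h']
        have h40 : (4 : ZMod 4) = 0 := by decide
        rw [h40, zero_mul, zero_add]
      rw [h1, h2] at heq4
      exact absurd heq4 (by decide)
  obtain ⟨a, ha⟩ : ∃ a, n = 2 * a + 1 := ⟨n / 2, by omega⟩
  obtain ⟨c, hc⟩ : ∃ c, m = 2 * c := ⟨m / 2, by omega⟩
  have ha1 : 1 ≤ a := by omega
  have hc1 : 1 ≤ c := by omega
  have hkey : a * (a + 1) = p * c ^ 2 := by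
    subst ha hc
    nlinarith [heq]
  have hdvd : p ∣ a * (a + 1) := ⟨c ^ 2, hkey⟩
  have hcop : Nat.Coprime a (a + 1) :=
    Nat.dvd_one.mp (by
      simpa using Nat.dvd_sub (Nat.gcd_dvd_right a (a + 1)) (Nat.gcd_dvd_left a (a + 1)))
  rcases (Nat.Prime.dvd_mul hp).mp hdvd with hpa | hpa1
  · -- p ∣ a : descent, contradiction with minimality
    exfalso
    obtain ⟨w, hw⟩ := hpa
    have hw1 : w * (a + 1) = c ^ 2 := by
      have h : p * (w * (a + 1)) = p * c ^ 2 := by rw [← hkey, hw]; ring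
      exact Nat.eq_of_mul_eq_mul_left hp0 h
    have hcop' : Nat.Coprime w (a + 1) :=
      Nat.Coprime.coprime_dvd_left ⟨p, by rw [hw]; ring⟩ hcop
    obtain ⟨u, hu⟩ : ∃ u, w = u ^ 2 :=
      exists_eq_pow_of_mul_eq_pow (Nat.isUnit_iff.mpr hcop') hw1
    obtain ⟨v, hv⟩ : ∃ v, a + 1 = v ^ 2 :=
      exists_eq_pow_of_mul_eq_pow (Nat.isUnit_iff.mpr hcop'.symm)
        (by rw [mul_comm] at hw1; exact hw1)
    have hu0 : 0 < u := by
      rcases Nat.eq_zero_or_pos u with h | h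
      · exfalso; subst h; simp at hu; rw [hu, mul_zero] at hw; omega
      · exact h
    have hv2 : 2 ≤ v := by
      by_contra h
      push_neg at h
      interval_cases v <;> omega
    have hveq : v ^ 2 = 1 + p * u ^ 2 := by
      have h : p * u ^ 2 = a := by rw [hw, hu]
      omega
    have hvsq : v < v ^ 2 := by
      have h := (Nat.mul_lt_mul_left (show 0 < v by omega)).mpr (show 1 < v by omega)
      calc v = v * 1 := (mul_one v).symm
        _ < v * v := h
        _ = v ^ 2 := (pow_two v).symm
    have hvn : v < n := by omega
    exact hmin v hvn ⟨by omega, u, hu0, hveq⟩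
  · -- p ∣ a + 1 : we get the solution
    obtain ⟨w, hw⟩ := hpa1
    have hw1 : a * w = c ^ 2 := by
      have h : p * (a * w) = p * c ^ 2 := by rw [← hkey, hw]; ring
      exact Nat.eq_of_mul_eq_mul_left hp0 h
    have hcop' : Nat.Coprime a w :=
      Nat.Coprime.coprime_dvd_right ⟨p, by rw [hw]; ring⟩ hcop
    obtain ⟨u, hu⟩ : ∃ u, a = u ^ 2 :=
      exists_eq_pow_of_mul_eq_pow (Nat.isUnit_iff.mpr hcop') hw1
    obtain ⟨v, hv⟩ : ∃ v, w = v ^ 2 :=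
      exists_eq_pow_of_mul_eq_pow (Nat.isUnit_iff.mpr hcop'.symm)
        (by rw [mul_comm] at hw1; exact hw1)
    refine ⟨(u : ℤ), (v : ℤ), ?_⟩
    have h1 : (a : ℤ) + 1 = (p : ℤ) * (v : ℤ) ^ 2 := by
      have h : a + 1 = p * v ^ 2 := by rw [hw, hv]
      exact_mod_cast h
    have hau : (a : ℤ) = (u : ℤ) ^ 2 := by exact_mod_cast hu
    linarith
end

section
/- If p is a prime with p ≡ 7 (mod 8), then the equation x² − p·y² = 2 has a solution in integers x, y. -/
/-- If `s * t = p * c ^ 2` with `s, t > 0` coprime and `p ∣ s`, then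
`s = p * b ^ 2` and `t = a ^ 2`. -/
lemma pell_aux_split (p : ℕ) (hp : p.Prime) (s t c : ℤ) (hs : 0 < s) (ht : 0 < t)
    (hco : IsCoprime s t) (heq : s * t = (p : ℤ) * c ^ 2) (hps : (p : ℤ) ∣ s) :
    ∃ a b : ℤ, 0 ≤ a ∧ s = (p : ℤ) * b ^ 2 ∧ t = a ^ 2 := by
  obtain ⟨s', rfl⟩ := hps
  have hp0 : (0 : ℤ) < p := by exact_mod_cast hp.pos
  have hs' : 0 < s' := by nlinarith
  have hco' : IsCoprime s' t := hco.of_mul_left_right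
  have heq' : s' * t = c ^ 2 := by
    have := heq
    have hpne : (p : ℤ) ≠ 0 := hp0.ne'
    apply mul_left_cancel₀ hpne
    nlinarith [this]
  obtain ⟨a, ha⟩ := Int.sq_of_isCoprime hco'.symm (by rw [mul_comm] at heq'; exact heq')
  obtain ⟨b, hb⟩ := Int.sq_of_isCoprime hco' heq'
  have hta : t = a ^ 2 := by
    rcases ha with h | h
    · exact h
    · nlinarith [sq_nonneg a]
  have hsb : s' = b ^ 2 := by
    rcases hb with h | h
    · exact h
    · nlinarith [sq_nonneg b]
  exact ⟨|a|, b, abs_nonneg a, by rw [hsb], by rw [hta, sq_abs]⟩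

theorem pell_two_of_prime_seven_mod_eight (p : ℕ) (hp : p.Prime) (hmod : p % 8 = 7) :
    ∃ x y : ℤ, x ^ 2 - (p : ℤ) * y ^ 2 = 2 := by
  haveI : Fact p.Prime := ⟨hp⟩
  have hp2 : p ≠ 2 := by omega
  have hpI : Prime (p : ℤ) := Nat.prime_iff_prime_int.mp hp
  have hp0 : (0 : ℤ) < p := by exact_mod_cast hp.pos
  have hns : ¬ IsSquare ((p : ℤ)) := Prime.not_isSquare hpI
  obtain ⟨A, hA⟩ := Pell.IsFundamental.exists_of_not_isSquare hp0 hns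
  set x := A.x with hxdef
  set y := A.y with hydef
  have hprop : x ^ 2 - (p : ℤ) * y ^ 2 = 1 := A.prop
  have hx1 : 1 < x := hA.1
  have hy0 : 0 < y := hA.2.1
  have key : (x - 1) * (x + 1) = (p : ℤ) * y ^ 2 := by ring_nf; linarith [hprop]
  rcases Int.even_or_odd x with ⟨k, hk⟩ | ⟨k, hk⟩
  · -- x even : x - 1 and x + 1 are odd and coprime
    have hco : IsCoprime (x - 1) (x + 1) := by
      rw [Int.isCoprime_iff_gcd_eq_one]
      have hgl : ((Int.gcd (x - 1) (x + 1) : ℕ) : ℤ) ∣ (x - 1) := Int.gcd_dvd_left _ _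
      have hgr : ((Int.gcd (x - 1) (x + 1) : ℕ) : ℤ) ∣ (x + 1) := Int.gcd_dvd_right _ _
      have h1 : ((Int.gcd (x - 1) (x + 1) : ℕ) : ℤ) ∣ 2 := by
        have := dvd_sub hgr hgl
        simpa using this
      have h2 : ¬ ((2 : ℤ) ∣ (x - 1)) := by
        rintro ⟨m, hm⟩
        omega
      have h3 : Int.gcd (x - 1) (x + 1) ∣ 2 := by exact_mod_cast h1
      rcases (Nat.dvd_prime Nat.prime_two).mp h3 with h | h
      · exact h
      · exfalso; apply h2; rw [h] at hgl; exact_mod_cast hgl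
    have hpd : (p : ℤ) ∣ (x - 1) * (x + 1) := ⟨y ^ 2, key⟩
    rcases hpI.2.2 _ _ hpd with h | h
    · -- p ∣ x - 1 : we get a solution
      obtain ⟨a, b, ha0, hs, ht⟩ := pell_aux_split p hp (x - 1) (x + 1) y
        (by linarith) (by linarith) hco key h
      exact ⟨a, b, by linarith⟩
    · -- p ∣ x + 1 : -2 is a square mod p, contradiction
      obtain ⟨a, b, ha0, hs, ht⟩ := pell_aux_split p hp (x + 1) (x - 1) y
        (by linarith) (by linarith) hco.symm (by linear_combination key) h
      exfalso
      have h' : (a : ℤ) ^ 2 = (p : ℤ) * b ^ 2 - 2 := by linarith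
      have h'' := congrArg (Int.cast : ℤ → ZMod p) h'
      push_cast at h''
      rw [ZMod.natCast_self] at h''
      have hsq : IsSquare (-2 : ZMod p) := ⟨(a : ZMod p), by rw [← sq]; rw [h'']; ring⟩
      rw [ZMod.exists_sq_eq_neg_two_iff hp2] at hsq
      omega
  · -- x odd, x = 2k + 1
    have hk1 : 1 ≤ k := by omega
    obtain ⟨c, hc⟩ : ∃ c, y = 2 * c := by
      rcases Int.even_or_odd y with ⟨c, hcc⟩ | ⟨m, hm⟩
      · exact ⟨c, by omega⟩
      · exfalso
        have hh := hprop
        rw [hk, hm] at hh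
        ring_nf at hh
        have h4 : (p : ℤ) = 4 * (k ^ 2 + k - (p : ℤ) * m ^ 2 - (p : ℤ) * m) := by
          ring_nf
          linarith [hh]
        have h5 : (4 : ℤ) ∣ (p : ℤ) := ⟨_, h4⟩
        have h6 : (4 : ℕ) ∣ p := by exact_mod_cast h5
        omega
    have hc0 : 0 < c := by omega
    have keyk : k * (k + 1) = (p : ℤ) * c ^ 2 := by
      have hh := hprop
      rw [hk, hc] at hh
      ring_nf at hh
      ring_nf
      linarith [hh]
    have hcok : IsCoprime k (k + 1) := ⟨-1, 1, by ring⟩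
    have hpdk : (p : ℤ) ∣ k * (k + 1) := ⟨c ^ 2, keyk⟩
    rcases hpI.2.2 _ _ hpdk with h | h
    · -- p ∣ k : smaller solution, contradicts minimality
      obtain ⟨a, b, ha0, hs, ht⟩ := pell_aux_split p hp k (k + 1) c
        (by omega) (by omega) hcok keyk h
      have hsol : a ^ 2 - (p : ℤ) * b ^ 2 = 1 := by linarith
      have ha2 : 1 < a := by nlinarith
      have hle : x ≤ a := by
        have h3 := hA.2.2 (show 1 < (Pell.Solution₁.mk a b hsol).x by
          rwa [Pell.Solution₁.x_mk])
        rwa [Pell.Solution₁.x_mk] at h3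
      exfalso
      nlinarith [hle, ht, hk, hx1]
    · -- p ∣ k + 1 : -1 is a square mod p, contradiction
      obtain ⟨a, b, ha0, hs, ht⟩ := pell_aux_split p hp (k + 1) k c
        (by omega) (by omega) hcok.symm (by linear_combination keyk) h
      exfalso
      have h' : (a : ℤ) ^ 2 = (p : ℤ) * b ^ 2 - 1 := by linarith
      have h'' := congrArg (Int.cast : ℤ → ZMod p) h'
      push_cast at h''
      rw [ZMod.natCast_self] at h''
      have hsq : IsSquare (-1 : ZMod p) := ⟨(a : ZMod p), by rw [← sq]; rw [h'']; ring⟩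
      rw [ZMod.exists_sq_eq_neg_one_iff] at hsq
      omega
end

section
/- If p is a prime with p ≡ 3 (mod 8), then the equation x² − p·y² = −2 has a solution in integers x, y. -/
private lemma zmod8_ne (u v : ZMod 8) : u ^ 2 - 3 * v ^ 2 ≠ 2 ∧ u ^ 2 - 3 * v ^ 2 ≠ -1 := by
  revert u v; decide

private lemma p_cast_zmod8 {p : ℕ} (hmod : p % 8 = 3) : ((p : ℕ) : ZMod 8) = 3 := by
  have h : ((p % 8 : ℕ) : ZMod 8) = ((p : ℕ) : ZMod 8) := ZMod.natCast_mod p 8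
  rw [hmod] at h
  simpa using h.symm

private lemma one_le_factor {p k c : ℤ} (hp3 : 3 ≤ p) (hc : 1 ≤ c) (h : c = p * k) : 1 ≤ k := by
  by_contra hcon
  push_neg at hcon
  have hk0 : k ≤ 0 := by omega
  nlinarith

set_option maxHeartbeats 1600000 in
private lemma descent (p : ℕ) (hp : p.Prime) (hmod : p % 8 = 3) :
    ∀ n : ℕ, ∀ a b : ℤ, b.natAbs = n → b ≠ 0 → a ^ 2 - (p : ℤ) * b ^ 2 = 1 →
      ∃ x y : ℤ, x ^ 2 - (p : ℤ) * y ^ 2 = -2 := by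
  have hp3 : (3 : ℤ) ≤ (p : ℤ) := by
    have := hp.two_le; omega
  have hpz : ((p : ℤ)) ≠ 0 := by positivity
  have hpprime : Prime ((p : ℤ)) := Nat.prime_iff_prime_int.mp hp
  intro n
  induction n using Nat.strong_induction_on with
  | _ n ih =>
    intro a₀ b₀ hbn hb0 heq₀
    -- WLOG nonnegative
    set a := |a₀| with ha
    set b := |b₀| with hb
    have heq : a ^ 2 - (p : ℤ) * b ^ 2 = 1 := by
      simpa [ha, hb, sq_abs] using heq₀
    have hb1 : 1 ≤ b := by
      have : b₀ ≠ 0 := hb0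
      have : 0 < |b₀| := abs_pos.mpr this
      omega
    have ha2 : 2 ≤ a := by
      nlinarith [abs_nonneg a₀, sq_nonneg b]
    have hbn' : b.natAbs = n := by
      rw [hb, Int.natAbs_abs, hbn]
    rcases Int.even_or_odd a with hae | hao
    · -- a even : (a-1)(a+1) = p b², coprime odd factors
      obtain ⟨m, hm⟩ := hae
      have hco : IsCoprime (a - 1) (a + 1) := by
        refine ⟨m, 1 - m, ?_⟩
        rw [hm]; ring
      have hfac : (a - 1) * (a + 1) = (p : ℤ) * b ^ 2 := by linarith [heq]
      have hdvd : ((p : ℤ)) ∣ (a - 1) * (a + 1) := ⟨b ^ 2, hfac⟩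
      rcases hpprime.dvd_mul.mp hdvd with hdl | hdr
      · -- p ∣ a - 1 : leads to u² - p v² = 2, impossible mod 8
        obtain ⟨k, hk⟩ := hdl
        have hcanc : (a + 1) * k = b ^ 2 := by
          apply mul_left_cancel₀ hpz
          rw [← hfac, hk]; ring
        have hco1 : IsCoprime (a + 1) k := by
          exact (hco.symm).of_isCoprime_of_dvd_right ⟨(p : ℤ), by rw [hk]; ring⟩
        obtain ⟨u, hu⟩ := Int.sq_of_isCoprime hco1 hcanc
        obtain ⟨v, hv⟩ := Int.sq_of_isCoprime hco1.symm (by rw [← hcanc]; ring)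
        have hk1 : 1 ≤ k := one_le_factor hp3 (by linarith) hk
        have hu' : a + 1 = u ^ 2 := by
          rcases hu with h | h
          · exact h
          · linarith [sq_nonneg u]
        have hv' : k = v ^ 2 := by
          rcases hv with h | h
          · exact h
          · linarith [sq_nonneg v]
        exfalso
        have hE : u ^ 2 - (p : ℤ) * v ^ 2 = 2 := by
          rw [← hu', ← hv']; linarith [hk]
        have h8 : ((u : ZMod 8)) ^ 2 - 3 * (v : ZMod 8) ^ 2 = 2 := by
          have := congrArg (fun z : ℤ => (z : ZMod 8)) hE
          push_cast at this
          rwa [p_cast_zmod8 hmod] at this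
        exact (zmod8_ne (u : ZMod 8) (v : ZMod 8)).1 h8
      · -- p ∣ a + 1 : gives u² - p v² = -2
        obtain ⟨k, hk⟩ := hdr
        have hcanc : (a - 1) * k = b ^ 2 := by
          apply mul_left_cancel₀ hpz
          rw [← hfac, hk]; ring
        have hco1 : IsCoprime (a - 1) k := by
          exact hco.of_isCoprime_of_dvd_right ⟨(p : ℤ), by rw [hk]; ring⟩
        obtain ⟨u, hu⟩ := Int.sq_of_isCoprime hco1 hcanc
        obtain ⟨v, hv⟩ := Int.sq_of_isCoprime hco1.symm (by rw [← hcanc]; ring)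
        have hk1 : 1 ≤ k := one_le_factor hp3 (by linarith) hk
        have hu' : a - 1 = u ^ 2 := by
          rcases hu with h | h
          · exact h
          · linarith [sq_nonneg u]
        have hv' : k = v ^ 2 := by
          rcases hv with h | h
          · exact h
          · linarith [sq_nonneg v]
        exact ⟨u, v, by rw [← hu', ← hv']; linarith [hk]⟩
    · -- a odd : descent
      obtain ⟨m, hm⟩ := hao
      have hpodd : Odd ((p : ℤ)) := by
        rw [Int.odd_coe_nat, Nat.odd_iff]; omega
      have hbeven : Even b := by
        by_contra hbe
        have hbo : Odd b := Int.not_even_iff_odd.mp hbe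
        have h1 : Odd ((p : ℤ) * b ^ 2) := hpodd.mul (hbo.pow)
        have h2 : Even (a ^ 2 - 1) := by
          have : Odd (a ^ 2) := (hm ▸ (odd_two_mul_add_one m)).pow
          exact Int.even_sub_one.mpr (Int.not_even_iff_odd.mpr this)
        rw [show a ^ 2 - 1 = (p : ℤ) * b ^ 2 by linarith [heq]] at h2
        exact (Int.not_odd_iff_even.mpr h2) h1
      obtain ⟨c, hc⟩ := hbeven
      have hm1 : 1 ≤ m := by omega
      have heq' : (2 * m + 1) ^ 2 - (p : ℤ) * (c + c) ^ 2 = 1 := by rw [← hm, ← hc]; exact heq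
      have h4 : 4 * (m * (m + 1)) = 4 * ((p : ℤ) * c ^ 2) := by linear_combination heq'
      have hfac : m * (m + 1) = (p : ℤ) * c ^ 2 := by linarith
      have hco : IsCoprime m (m + 1) := ⟨-1, 1, by ring⟩
      have hdvd : ((p : ℤ)) ∣ m * (m + 1) := ⟨c ^ 2, hfac⟩
      rcases hpprime.dvd_mul.mp hdvd with hdl | hdr
      · -- p ∣ m : new smaller solution u² - p v² = 1
        obtain ⟨k, hk⟩ := hdl
        have hcanc : (m + 1) * k = c ^ 2 := by
          apply mul_left_cancel₀ hpz
          rw [← hfac, hk]; ring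
        have hco1 : IsCoprime (m + 1) k := by
          exact (hco.symm).of_isCoprime_of_dvd_right ⟨(p : ℤ), by rw [hk]; ring⟩
        obtain ⟨u, hu⟩ := Int.sq_of_isCoprime hco1 hcanc
        obtain ⟨v, hv⟩ := Int.sq_of_isCoprime hco1.symm (by rw [← hcanc]; ring)
        have hk1 : 1 ≤ k := one_le_factor hp3 (by linarith) hk
        have hu' : m + 1 = u ^ 2 := by
          rcases hu with h | h
          · exact h
          · linarith [sq_nonneg u]
        have hv' : k = v ^ 2 := by
          rcases hv with h | h
          · exact h
          · linarith [sq_nonneg v]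
        have hv0 : v ≠ 0 := by
          intro h; rw [h] at hv'; simp at hv'; omega
        have hnewsol : u ^ 2 - (p : ℤ) * v ^ 2 = 1 := by
          rw [← hu', ← hv']; linarith [hk]
        have hlt : v.natAbs < n := by
          rw [← hbn']
          have hbc : b ^ 2 = 4 * ((m + 1) * k) := by rw [hcanc, hc]; ring
          have hmk : 2 * k ≤ (m + 1) * k := by nlinarith [hm1, hk1]
          have hsq : v ^ 2 < b ^ 2 := by rw [← hv'] at *; linarith
          have h1 : ((v.natAbs : ℤ)) ^ 2 < ((b.natAbs : ℤ)) ^ 2 := by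
            rwa [Int.natAbs_sq, Int.natAbs_sq]
          have h2 : (v.natAbs : ℤ) < (b.natAbs : ℤ) := by
            by_contra hcon
            push_neg at hcon
            nlinarith [Int.ofNat_nonneg b.natAbs, Int.ofNat_nonneg v.natAbs, h1, hcon]
          exact_mod_cast h2
        exact ih v.natAbs hlt u v rfl hv0 hnewsol
      · -- p ∣ m + 1 : u² - p v² = -1, impossible mod 8
        obtain ⟨k, hk⟩ := hdr
        have hcanc : m * k = c ^ 2 := by
          apply mul_left_cancel₀ hpz
          rw [← hfac, hk]; ring
        have hco1 : IsCoprime m k := by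
          exact hco.of_isCoprime_of_dvd_right ⟨(p : ℤ), by rw [hk]; ring⟩
        obtain ⟨u, hu⟩ := Int.sq_of_isCoprime hco1 hcanc
        obtain ⟨v, hv⟩ := Int.sq_of_isCoprime hco1.symm (by rw [← hcanc]; ring)
        have hk1 : 1 ≤ k := one_le_factor hp3 (by linarith) hk
        have hu' : m = u ^ 2 := by
          rcases hu with h | h
          · exact h
          · linarith [sq_nonneg u]
        have hv' : k = v ^ 2 := by
          rcases hv with h | h
          · exact h
          · linarith [sq_nonneg v]
        exfalso
        have hE : u ^ 2 - (p : ℤ) * v ^ 2 = -1 := by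
          rw [← hu', ← hv']; linarith [hk]
        have h8 : ((u : ZMod 8)) ^ 2 - 3 * (v : ZMod 8) ^ 2 = -1 := by
          have := congrArg (fun z : ℤ => (z : ZMod 8)) hE
          push_cast at this
          rwa [p_cast_zmod8 hmod] at this
        exact (zmod8_ne (u : ZMod 8) (v : ZMod 8)).2 h8

theorem pell_neg_two_of_prime_three_mod_eight (p : ℕ) (hp : p.Prime) (hmod : p % 8 = 3) :
    ∃ x y : ℤ, x ^ 2 - (p : ℤ) * y ^ 2 = -2 := by
  have hns : ¬ IsSquare ((p : ℤ)) := by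
    rintro ⟨r, hr⟩
    have h8 : (3 : ZMod 8) = (r : ZMod 8) * (r : ZMod 8) := by
      have := congrArg (fun z : ℤ => (z : ZMod 8)) hr
      push_cast at this
      rwa [p_cast_zmod8 hmod] at this
    revert h8
    generalize (r : ZMod 8) = s
    revert s; decide
  have hp0 : (0 : ℤ) < (p : ℤ) := by exact_mod_cast hp.pos
  obtain ⟨x, y, hxy, hy0⟩ := Pell.exists_of_not_isSquare hp0 hns
  exact descent p hp hmod y.natAbs x y rfl hy0 hxy
end

section
/- Let p be a prime with p ≡ 3 (mod 8) and let (x₀, y₀) be an integer solution of x² − p·y² = −2. Then the two elements (x₀ + y₀√(−p))/2 and (x₀ − y₀√(−p))/2 are algebraic integers in ℚ(√(−p)) whose squares sum to −1. -/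
open Polynomial

theorem half_elements_integral_and_squares_sum_neg_one
    (p : ℕ) (hp : p.Prime) (hmod : p % 8 = 3) (s : ℂ) (hs : s ^ 2 = -(p : ℂ))
    (x₀ y₀ : ℤ) (hsol : x₀ ^ 2 - (p : ℤ) * y₀ ^ 2 = -2) :
    ((x₀ + y₀ * s) / 2 ∈ IntermediateField.adjoin ℚ {s} ∧
      (x₀ - y₀ * s) / 2 ∈ IntermediateField.adjoin ℚ {s}) ∧
    IsIntegral ℤ ((x₀ + y₀ * s) / 2 : ℂ) ∧ IsIntegral ℤ ((x₀ - y₀ * s) / 2 : ℂ) ∧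
    ((x₀ + y₀ * s) / 2 : ℂ) ^ 2 + ((x₀ - y₀ * s) / 2 : ℂ) ^ 2 = -1 := by
  have hdvd : (4 : ℤ) ∣ x₀ ^ 2 + (p : ℤ) * y₀ ^ 2 := by
    have hp4 : ((p : ℕ) : ZMod 4) = 3 := by
      rw [← ZMod.natCast_mod, show p % 4 = 3 by omega]; norm_num
    have h0 : ((x₀ ^ 2 + (p : ℤ) * y₀ ^ 2 : ℤ) : ZMod 4) = 0 := by
      have hc := congrArg (Int.cast : ℤ → ZMod 4) hsol
      push_cast [hp4] at hc ⊢
      have key : ∀ a b : ZMod 4, a ^ 2 - 3 * b ^ 2 = -2 → a ^ 2 + 3 * b ^ 2 = 0 := by decide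
      exact key _ _ hc
    exact_mod_cast (ZMod.intCast_zmod_eq_zero_iff_dvd _ 4).mp h0
  obtain ⟨n, hn⟩ := hdvd
  have hint : ∀ t : ℂ, t ^ 2 - (x₀ : ℂ) * t + (n : ℂ) = 0 → IsIntegral ℤ t := by
    intro t ht
    refine ⟨X ^ 2 - C x₀ * X + C n, ?_, ?_⟩
    · monicity!
    · simp only [eval₂_add, eval₂_sub, eval₂_pow, eval₂_mul, eval₂_X, eval₂_C]
      simpa using ht
  have hn' : (x₀:ℂ)^2 + (p:ℂ) * (y₀:ℂ)^2 = 4 * (n:ℂ) := by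
    have := congrArg (Int.cast : ℤ → ℂ) hn
    push_cast at this; exact this
  have hsol' : (x₀:ℂ)^2 - (p:ℂ) * (y₀:ℂ)^2 = -2 := by
    have := congrArg (Int.cast : ℤ → ℂ) hsol
    push_cast at this; exact this
  have hsK : s ∈ IntermediateField.adjoin ℚ {s} :=
    IntermediateField.mem_adjoin_simple_self ℚ s
  have h2K : (2 : ℂ) ∈ IntermediateField.adjoin ℚ {s} := by
    exact_mod_cast natCast_mem (IntermediateField.adjoin ℚ {s}) 2
  refine ⟨⟨div_mem (add_mem (intCast_mem _ _) (mul_mem (intCast_mem _ _) hsK)) h2K,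
      div_mem (sub_mem (intCast_mem _ _) (mul_mem (intCast_mem _ _) hsK)) h2K⟩,
    hint _ (by linear_combination ((y₀:ℂ)^2/4) * hs - (1/4) * hn'),
    hint _ (by linear_combination ((y₀:ℂ)^2/4) * hs - (1/4) * hn'),
    by linear_combination ((y₀:ℂ)^2/2) * hs + (1/2) * hsol'⟩
end

section
/- Let p be a prime with p ≡ 3 (mod 4) and let (x₀, y₀) be an integer solution of x² − p·y² = ±2 (one of the two equations is solvable). Set A = (x₀² + p·y₀²)/2 and B = x₀·y₀. Then A, B are integers, B is odd, and A² − p·B² = 1. -/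
theorem norm_one_unit_from_pell_two (p : ℕ) (hp : p.Prime) (hmod : p % 4 = 3)
    (x₀ y₀ : ℤ) (hsol : x₀ ^ 2 - (p : ℤ) * y₀ ^ 2 = 2 ∨ x₀ ^ 2 - (p : ℤ) * y₀ ^ 2 = -2) :
    ∃ A : ℤ, 2 * A = x₀ ^ 2 + (p : ℤ) * y₀ ^ 2 ∧ Odd (x₀ * y₀) ∧
      A ^ 2 - (p : ℤ) * (x₀ * y₀) ^ 2 = 1 := by
  have hpo : Odd ((p : ℤ)) := by
    have : Odd p := Nat.odd_iff.mpr (by omega)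
    exact_mod_cast this
  have hpe : ¬ Even ((p : ℤ)) := Int.not_even_iff_odd.mpr hpo
  have heven : Even (x₀ ^ 2 - (p : ℤ) * y₀ ^ 2) := by
    rcases hsol with h | h <;> rw [h]
    · exact ⟨1, rfl⟩
    · exact ⟨-1, by norm_num⟩
  rw [Int.even_sub] at heven
  simp only [Int.even_pow, Int.even_mul, hpe, false_or] at heven
  have hodd : Odd x₀ ∧ Odd y₀ := by
    rcases Int.even_or_odd x₀ with hx | hx
    · exfalso
      have hy : Even y₀ := by
        exact (heven.mp ⟨hx, by norm_num⟩).1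
      obtain ⟨m, hm⟩ := hx
      obtain ⟨n, hn⟩ := hy
      have h4 : (4 : ℤ) ∣ x₀ ^ 2 - (p : ℤ) * y₀ ^ 2 :=
        ⟨m ^ 2 - (p : ℤ) * n ^ 2, by rw [hm, hn]; ring⟩
      rcases hsol with h | h <;> rw [h] at h4 <;> omega
    · refine ⟨hx, ?_⟩
      rcases Int.even_or_odd y₀ with hy | hy
      · exfalso
        have : Even x₀ := by
          exact (heven.mpr ⟨hy, by norm_num⟩).1
        exact (Int.not_even_iff_odd.mpr hx) this
      · exact hy
  have hxyo : Odd (x₀ * y₀) := hodd.1.mul hodd.2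
  rcases hsol with h | h
  · exact ⟨(p : ℤ) * y₀ ^ 2 + 1, by linarith, hxyo,
      by linear_combination (-(p : ℤ) * y₀ ^ 2) * h⟩
  · exact ⟨(p : ℤ) * y₀ ^ 2 - 1, by linarith, hxyo,
      by linear_combination (-(p : ℤ) * y₀ ^ 2) * h⟩
end
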